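/- For every integer k ≥ 2, the eta invariant of the lens space L(k^2-1, k), given by η = -(1/(k^2-1)) ∑_{i=1}^{k^2-2} cot(iπ/(k^2-1)) cot(kiπ/(k^2-1)), equals -(1/(k^2-1)) · ((2/3)k^3 - 2k^2 + 2). -/

import Mathlib

open Real Finset


/-- The eta invariant of the lens space `L(k²-1, k)`, defined by the
Atiyah–Patodi–Singer formula. -/
noncomputable def etaLens (k : ℕ) : ℝ :=
  -(1 / ((k : ℝ) ^ 2 - 1)) *
    ∑ i ∈ Finset.Icc (1 : ℕ) (k ^ 2 - 2),
      Real.cot ((i : ℝ) * Real.pi / ((k : ℝ) ^ 2 - 1)) * Real.cot ((k : ℝ) * (i : ℝ) * Real.pi / ((k : ℝ) ^ 2 - 1))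

lemma sum_range_cast (n : ℕ) : ∑ i ∈ Finset.range n, (i : ℂ) = n * (n - 1) / 2 := by
  induction n with
  | zero => simp
  | succ m ih => rw [Finset.sum_range_succ, ih]; push_cast; ring

lemma sum_range_sq (n : ℕ) : ∑ i ∈ Finset.range n, (i : ℂ) ^ 2 = n * (n - 1) * (2 * n - 1) / 6 := by
  induction n with
  | zero => simp
  | succ m ih => rw [Finset.sum_range_succ, ih]; push_cast; ring

lemma sum_poly (c0 c1 c2 : ℂ) (n : ℕ) :
    ∑ r ∈ Finset.range n, (c0 + c1 * r + c2 * (r : ℂ) ^ 2)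
      = c0 * n + c1 * (n * (n - 1) / 2) + c2 * (n * (n - 1) * (2 * n - 1) / 6) := by
  rw [Finset.sum_add_distrib, Finset.sum_add_distrib, ← Finset.mul_sum, ← Finset.mul_sum,
    Finset.sum_const, sum_range_cast, sum_range_sq, Finset.card_range, nsmul_eq_mul, mul_comm (n : ℂ) c0]

lemma mul_geom_aux (x : ℂ) (n : ℕ) :
    (x - 1) * ∑ m ∈ Finset.range n, (m : ℂ) * x ^ m
      = ((n : ℂ) - 1) * x ^ n + 1 - ∑ m ∈ Finset.range n, x ^ m := by
  induction n with
  | zero => simp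
  | succ m ih =>
    rw [Finset.sum_range_succ, Finset.sum_range_succ (f := fun m => x ^ m), mul_add, ih]
    push_cast; ring

lemma block_sum {M : Type*} [AddCommMonoid M] (f : ℕ → M) (a b : ℕ) :
    ∑ n ∈ Finset.range (a * b), f n = ∑ q ∈ Finset.range a, ∑ r ∈ Finset.range b, f (q * b + r) := by
  induction a with
  | zero => simp
  | succ m ih =>
    rw [Finset.sum_range_succ, ← ih, Nat.succ_mul, Finset.sum_range_add]

lemma cot_complex (θ : ℝ) (hs : Real.sin θ ≠ 0) :
    (Real.cot θ : ℂ) * (Complex.exp (2 * θ * Complex.I) - 1)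
      = Complex.I * (Complex.exp (2 * θ * Complex.I) + 1) := by
  have hE := Complex.exp_ne_zero ((θ : ℂ) * Complex.I)
  have h2 : Complex.exp (2 * θ * Complex.I)
      = Complex.exp ((θ:ℂ) * Complex.I) * Complex.exp ((θ:ℂ) * Complex.I) := by
    rw [← Complex.exp_add]; ring_nf
  have hsC : Complex.sin θ ≠ 0 := by
    rw [← Complex.ofReal_sin]
    exact Complex.ofReal_ne_zero.2 hs
  rw [Real.cot_eq_cos_div_sin]
  push_cast
  rw [div_mul_eq_mul_div, div_eq_iff hsC, Complex.sin, Complex.cos, h2]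
  rw [show ((-θ : ℂ) * Complex.I) = -((θ:ℂ) * Complex.I) by ring, Complex.exp_neg]
  field_simp
  linear_combination (Complex.exp ((θ:ℂ) * Complex.I) ^ 4 - 1) * Complex.I_sq

lemma Dval (p : ℕ) (hp : 0 < p) (ζ : ℂ) (hζ : IsPrimitiveRoot ζ p) (a : ℕ) :
    ∑ i ∈ Finset.range p, (ζ ^ a) ^ i = if p ∣ a then (p : ℂ) else 0 := by
  by_cases h : p ∣ a
  · rw [if_pos h, (hζ.pow_eq_one_iff_dvd a).2 h]
    simp
  · rw [if_neg h, geom_sum_eq (fun h1 => h ((hζ.pow_eq_one_iff_dvd a).1 h1)),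
      ← pow_mul, mul_comm a p, pow_mul, hζ.pow_eq_one, one_pow]
    simp

lemma Aval (p : ℕ) (hp : 0 < p) (ζ : ℂ) (hζ : IsPrimitiveRoot ζ p) (a : ℕ) (ha : ¬ p ∣ a) :
    (ζ ^ a - 1) * ∑ m ∈ Finset.range p, (m : ℂ) * (ζ ^ a) ^ m = p := by
  rw [mul_geom_aux]
  have h0 : ∑ m ∈ Finset.range p, (ζ ^ a) ^ m = 0 := by
    rw [Dval p hp ζ hζ a, if_neg ha]
  rw [h0, ← pow_mul, mul_comm a p, pow_mul, hζ.pow_eq_one, one_pow]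
  ring

theorem eta_lens_formula (k : ℕ) (hk : 2 ≤ k) :
    etaLens k = -(1 / ((k : ℝ) ^ 2 - 1)) * ((2 / 3) * (k : ℝ) ^ 3 - 2 * (k : ℝ) ^ 2 + 2) := by
  have hk2 : k ^ 2 = k * k := sq k
  have hk4 : 4 ≤ k * k := Nat.mul_le_mul hk hk
  set p : ℕ := k ^ 2 - 1 with hpdef
  have hkk : k * k = p + 1 := by omega
  have hp0 : 0 < p := by omega
  have hkp2 : k ^ 2 - 2 = p - 1 := by omega
  have hPR : (k : ℝ) ^ 2 - 1 = (p : ℝ) := by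
    rw [hpdef, Nat.cast_sub (by omega)]
    push_cast
    ring
  have hPC : (p : ℂ) = (k : ℂ) ^ 2 - 1 := by
    rw [hpdef, Nat.cast_sub (by omega)]
    push_cast
    ring
  have hp0R : (p : ℝ) ≠ 0 := Nat.cast_ne_zero.2 (by omega)
  have hp0C : (p : ℂ) ≠ 0 := Nat.cast_ne_zero.2 (by omega)
  -- number theory helpers
  have hdvd : ∀ i : ℕ, p ∣ k * i → p ∣ i := by
    intro i ⟨c, hc⟩
    have hkkZ : (k : ℤ) * k = p + 1 := by exact_mod_cast hkk
    have hcZ : (k : ℤ) * i = p * c := by exact_mod_cast hc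
    have : (i : ℤ) = p * (k * c - i) := by linear_combination (k:ℤ) * hcZ - (i:ℤ) * hkkZ
    exact_mod_cast Int.natCast_dvd_natCast.mp (Dvd.intro _ this.symm)
  have hnd : ∀ i : ℕ, 1 ≤ i → i ≤ p - 1 → ¬ p ∣ i := by
    intro i h1 h2 hd
    have := Nat.le_of_dvd (by omega) hd
    omega
  -- the primitive root
  set ζ : ℂ := Complex.exp (2 * Real.pi * Complex.I / p) with hζdef
  have hprim : IsPrimitiveRoot ζ p := Complex.isPrimitiveRoot_exp p (by omega)
  have hne1 : ∀ j : ℕ, ¬ p ∣ j → ζ ^ j ≠ 1 := fun j h hh => h ((hprim.pow_eq_one_iff_dvd j).1 hh)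
  -- the A sums
  set A : ℕ → ℂ := fun a => ∑ m ∈ Finset.range p, (m : ℂ) * (ζ ^ a) ^ m with hAdef
  set G : ℕ → ℂ := fun i =>
    -((1 + 2 / (p : ℂ) * A i) * (1 + 2 / (p : ℂ) * A (k * i))) with hGdef
  -- the main sum, real
  have hS : ∑ i ∈ Finset.Icc (1 : ℕ) (k ^ 2 - 2),
      Real.cot ((i : ℝ) * Real.pi / ((k : ℝ) ^ 2 - 1)) *
        Real.cot ((k : ℝ) * (i : ℝ) * Real.pi / ((k : ℝ) ^ 2 - 1))
      = (2 / 3) * (k : ℝ) ^ 3 - 2 * (k : ℝ) ^ 2 + 2 := by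
    rw [hkp2, hPR]
    -- per-term identity over ℂ
    have key : ∀ i ∈ Finset.Icc (1 : ℕ) (p - 1),
        ((Real.cot ((i : ℝ) * Real.pi / (p : ℝ)) *
          Real.cot ((k : ℝ) * (i : ℝ) * Real.pi / (p : ℝ)) : ℝ) : ℂ) = G i := by
      intro i hi
      rw [Finset.mem_Icc] at hi
      have hpi : ¬ p ∣ i := hnd i hi.1 hi.2
      have hpki : ¬ p ∣ k * i := fun h => hpi (hdvd i h)
      set θ1 : ℝ := (i : ℝ) * Real.pi / (p : ℝ) with hθ1def
      set θ2 : ℝ := (k : ℝ) * (i : ℝ) * Real.pi / (p : ℝ) with hθ2def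
      have hiR : (1 : ℝ) ≤ (i : ℝ) := by exact_mod_cast hi.1
      have hiltR : (i : ℝ) < (p : ℝ) := by exact_mod_cast (by omega : i < p)
      have hs1 : Real.sin θ1 ≠ 0 := by
        apply ne_of_gt
        apply Real.sin_pos_of_pos_of_lt_pi
        · apply div_pos (mul_pos (by linarith) Real.pi_pos) (by positivity)
        · rw [div_lt_iff₀ (by positivity)]
          nlinarith [Real.pi_pos]
      have hs2 : Real.sin θ2 ≠ 0 := by
        intro h0
        rw [Real.sin_eq_zero_iff] at h0
        obtain ⟨n, hn⟩ := h0
        rw [hθ2def] at hn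
        have hπ : Real.pi ≠ 0 := Real.pi_ne_zero
        have h2 : (n : ℝ) * p = (k : ℝ) * i := by
          field_simp at hn
          exact hn
        have h3 : (n * p : ℤ) = (k * i : ℤ) := by exact_mod_cast h2
        refine hpki (Int.natCast_dvd_natCast.mp ⟨n, ?_⟩)
        push_cast
        linear_combination -h3
      have hexp1 : Complex.exp (2 * (θ1 : ℂ) * Complex.I) = ζ ^ i := by
        rw [hζdef, ← Complex.exp_nat_mul]
        congr 1
        rw [hθ1def]
        push_cast
        field_simp
      have hexp2 : Complex.exp (2 * (θ2 : ℂ) * Complex.I) = ζ ^ (k * i) := by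
        rw [hζdef, ← Complex.exp_nat_mul]
        congr 1
        rw [hθ2def]
        push_cast
        field_simp
      have hc1 : ((Real.cot θ1 : ℝ) : ℂ) * (ζ ^ i - 1) = Complex.I * (ζ ^ i + 1) := by
        rw [← hexp1]; exact cot_complex θ1 hs1
      have hc2 : ((Real.cot θ2 : ℝ) : ℂ) * (ζ ^ (k * i) - 1) = Complex.I * (ζ ^ (k * i) + 1) := by
        rw [← hexp2]; exact cot_complex θ2 hs2
      have hu1 : ζ ^ i - 1 ≠ 0 := sub_ne_zero.2 (hne1 i hpi)
      have hv1 : ζ ^ (k * i) - 1 ≠ 0 := sub_ne_zero.2 (hne1 (k * i) hpki)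
      have hA1 : (ζ ^ i - 1) * A i = p := Aval p hp0 ζ hprim i hpi
      have hA2 : (ζ ^ (k * i) - 1) * A (k * i) = p := Aval p hp0 ζ hprim (k * i) hpki
      have e1 : (1 + 2 / (p : ℂ) * A i) * (ζ ^ i - 1) = ζ ^ i + 1 := by
        field_simp
        linear_combination 2 * hA1
      have e2 : (1 + 2 / (p : ℂ) * A (k * i)) * (ζ ^ (k * i) - 1) = ζ ^ (k * i) + 1 := by
        field_simp
        linear_combination 2 * hA2
      apply mul_right_cancel₀ (mul_ne_zero hu1 hv1)
      rw [Complex.ofReal_mul]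
      calc ((Real.cot θ1 : ℝ) : ℂ) * ((Real.cot θ2 : ℝ) : ℂ) * ((ζ ^ i - 1) * (ζ ^ (k * i) - 1))
          = (((Real.cot θ1 : ℝ) : ℂ) * (ζ ^ i - 1)) *
            (((Real.cot θ2 : ℝ) : ℂ) * (ζ ^ (k * i) - 1)) := by ring
        _ = (Complex.I * (ζ ^ i + 1)) * (Complex.I * (ζ ^ (k * i) + 1)) := by rw [hc1, hc2]
        _ = -((ζ ^ i + 1) * (ζ ^ (k * i) + 1)) := by
            linear_combination (ζ ^ i + 1) * (ζ ^ (k * i) + 1) * Complex.I_sq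
        _ = -(((1 + 2 / (p : ℂ) * A i) * (ζ ^ i - 1)) *
              ((1 + 2 / (p : ℂ) * A (k * i)) * (ζ ^ (k * i) - 1))) := by rw [e1, e2]
        _ = G i * ((ζ ^ i - 1) * (ζ ^ (k * i) - 1)) := by rw [hGdef]; ring
    -- sums of A
    have hpow_swap : ∀ a b : ℕ, (ζ ^ a) ^ b = (ζ ^ b) ^ a := by
      intro a b
      rw [← pow_mul, ← pow_mul, mul_comm]
    have hSA : ∑ i ∈ Finset.range p, A i = 0 := by
      rw [hAdef]
      calc ∑ i ∈ Finset.range p, ∑ m ∈ Finset.range p, (m : ℂ) * (ζ ^ i) ^ m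
          = ∑ m ∈ Finset.range p, ∑ i ∈ Finset.range p, (m : ℂ) * (ζ ^ i) ^ m :=
            Finset.sum_comm
        _ = ∑ m ∈ Finset.range p, (m : ℂ) * ∑ i ∈ Finset.range p, (ζ ^ m) ^ i := by
            refine Finset.sum_congr rfl fun m _ => ?_
            rw [Finset.mul_sum]
            exact Finset.sum_congr rfl fun i _ => by rw [hpow_swap]
        _ = 0 := by
            apply Finset.sum_eq_zero
            intro m hm
            rw [Finset.mem_range] at hm
            by_cases h : m = 0
            · simp [h]
            · rw [Dval p hp0 ζ hprim m, if_neg (hnd m (by omega) (by omega)), mul_zero]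
    have hSB : ∑ i ∈ Finset.range p, A (k * i) = 0 := by
      rw [hAdef]
      calc ∑ i ∈ Finset.range p, ∑ n ∈ Finset.range p, (n : ℂ) * (ζ ^ (k * i)) ^ n
          = ∑ n ∈ Finset.range p, ∑ i ∈ Finset.range p, (n : ℂ) * (ζ ^ (k * i)) ^ n :=
            Finset.sum_comm
        _ = ∑ n ∈ Finset.range p, (n : ℂ) * ∑ i ∈ Finset.range p, (ζ ^ (k * n)) ^ i := by
            refine Finset.sum_congr rfl fun n _ => ?_
            rw [Finset.mul_sum]
            refine Finset.sum_congr rfl fun i _ => ?_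
            rw [← pow_mul, ← pow_mul]
            congr 1
            ring
        _ = 0 := by
            apply Finset.sum_eq_zero
            intro n hn
            rw [Finset.mem_range] at hn
            by_cases h : n = 0
            · simp [h]
            · rw [Dval p hp0 ζ hprim (k * n),
                if_neg (fun hd => hnd n (by omega) (by omega) (hdvd n hd)), mul_zero]
    -- the double sum
    set m₀ : ℕ → ℕ := fun n => (p - k * n % p) % p with hm₀def
    have hm₀lt : ∀ n, m₀ n < p := fun n => Nat.mod_lt _ hp0
    have hm₀dvd : ∀ n, p ∣ m₀ n + k * n := by
      intro n
      have hmod := Nat.div_add_mod (k * n) p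
      have hrlt : k * n % p < p := Nat.mod_lt _ hp0
      rw [hm₀def]
      by_cases h : k * n % p = 0
      · refine ⟨k * n / p, ?_⟩
        simp only [h, Nat.sub_zero, Nat.mod_self]
        generalize p * (k * n / p) = t at hmod ⊢
        omega
      · have hlt : (p - k * n % p) % p = p - k * n % p := Nat.mod_eq_of_lt (by omega)
        refine ⟨k * n / p + 1, ?_⟩
        simp only [hlt, Nat.mul_add, Nat.mul_one]
        generalize p * (k * n / p) = t at hmod ⊢
        omega
    have hm₀uniq : ∀ n b, b < p → p ∣ b + k * n → b = m₀ n := by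
      intro n b hb hd
      have h1 : (b + k * n) ≡ 0 [MOD p] := (Nat.modEq_zero_iff_dvd).2 hd
      have h2 : (m₀ n + k * n) ≡ 0 [MOD p] := (Nat.modEq_zero_iff_dvd).2 (hm₀dvd n)
      have h3 : b ≡ m₀ n [MOD p] := Nat.ModEq.add_right_cancel' (k * n) (h1.trans h2.symm)
      have h4 : b % p = m₀ n % p := h3
      rwa [Nat.mod_eq_of_lt hb, Nat.mod_eq_of_lt (hm₀lt n)] at h4
    set Nc : ℂ := ∑ n ∈ Finset.range p, (n : ℂ) * (m₀ n : ℂ) with hNcdef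
    have hSAB : ∑ i ∈ Finset.range p, A i * A (k * i) = (p : ℂ) * Nc := by
      rw [hAdef, hNcdef]
      calc ∑ i ∈ Finset.range p,
            ((∑ m ∈ Finset.range p, (m : ℂ) * (ζ ^ i) ^ m) *
             (∑ n ∈ Finset.range p, (n : ℂ) * (ζ ^ (k * i)) ^ n))
          = ∑ i ∈ Finset.range p, ∑ m ∈ Finset.range p, ∑ n ∈ Finset.range p,
              ((m : ℂ) * (n : ℂ)) * (ζ ^ (m + k * n)) ^ i := by
            refine Finset.sum_congr rfl fun i _ => ?_
            rw [Finset.sum_mul_sum]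
            refine Finset.sum_congr rfl fun m _ => Finset.sum_congr rfl fun n _ => ?_
            have hz : (ζ ^ i) ^ m * (ζ ^ (k * i)) ^ n = (ζ ^ (m + k * n)) ^ i := by
              rw [← pow_mul, ← pow_mul, ← pow_mul, ← pow_add]
              congr 1
              ring
            calc (m : ℂ) * (ζ ^ i) ^ m * ((n : ℂ) * (ζ ^ (k * i)) ^ n)
                = ((m : ℂ) * (n : ℂ)) * ((ζ ^ i) ^ m * (ζ ^ (k * i)) ^ n) := by ring
              _ = ((m : ℂ) * (n : ℂ)) * (ζ ^ (m + k * n)) ^ i := by rw [hz]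
        _ = ∑ m ∈ Finset.range p, ∑ n ∈ Finset.range p,
              ((m : ℂ) * (n : ℂ)) * ∑ i ∈ Finset.range p, (ζ ^ (m + k * n)) ^ i := by
            rw [Finset.sum_comm]
            refine Finset.sum_congr rfl fun m _ => ?_
            rw [Finset.sum_comm]
            exact Finset.sum_congr rfl fun n _ => (Finset.mul_sum _ _ _).symm
        _ = ∑ n ∈ Finset.range p, ∑ m ∈ Finset.range p,
              ((m : ℂ) * (n : ℂ)) * (if p ∣ m + k * n then (p : ℂ) else 0) := by
            rw [Finset.sum_comm]
            exact Finset.sum_congr rfl fun n _ => Finset.sum_congr rfl fun m _ => by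
              rw [Dval p hp0 ζ hprim (m + k * n)]
        _ = ∑ n ∈ Finset.range p, (p : ℂ) * ((n : ℂ) * (m₀ n : ℂ)) := by
            refine Finset.sum_congr rfl fun n _ => ?_
            rw [Finset.sum_eq_single (m₀ n)]
            · rw [if_pos (hm₀dvd n)]; ring
            · intro b hb hbne
              rw [Finset.mem_range] at hb
              rw [if_neg (fun hd => hbne (hm₀uniq n b hb hd)), mul_zero]
            · intro h
              exact absurd (Finset.mem_range.2 (hm₀lt n)) h
        _ = (p : ℂ) * ∑ n ∈ Finset.range p, (n : ℂ) * (m₀ n : ℂ) := by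
            rw [Finset.mul_sum]
    -- evaluate Nc
    have hle : ∀ q r : ℕ, q < k → r < k → q + r * k ≤ p := by
      intro q r hq hr
      have h1 : (r + 1) * k ≤ k * k := Nat.mul_le_mul_right k (by omega)
      have h2 : (r + 1) * k = r * k + k := by ring
      omega
    have hm₀val : ∀ q r : ℕ, q < k → r < k → ¬(q = 0 ∧ r = 0) →
        m₀ (q * k + r) = p - (q + r * k) := by
      intro q r hq hr hqr
      have hle' := hle q r hq hr
      have hge : 1 ≤ q + r * k := by
        rcases Nat.eq_zero_or_pos q with h | h
        · have hr1 : 1 ≤ r := by omega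
          have : k ≤ r * k := Nat.le_mul_of_pos_left k (by omega)
          omega
        · omega
      have e : k * (q * k + r) = (q + r * k) + q * p := by
        have h3 : k * (q * k + r) = q * (k * k) + r * k := by ring
        rw [h3, hkk]
        ring
      have emod : k * (q * k + r) % p = (q + r * k) % p := by
        rw [e, Nat.add_mul_mod_self_right]
      rw [hm₀def]
      simp only [emod]
      rcases Nat.lt_or_ge (q + r * k) p with h | h
      · rw [Nat.mod_eq_of_lt h, Nat.mod_eq_of_lt (by omega)]
      · have heq : q + r * k = p := by omega
        rw [heq, Nat.mod_self, Nat.sub_zero, Nat.mod_self, Nat.sub_self]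
    have hm₀p : m₀ p = 0 := by
      rw [hm₀def]
      simp only [Nat.mul_mod_left, Nat.sub_zero, Nat.mod_self]
    have hNc1 : Nc = ∑ q ∈ Finset.range k, ∑ r ∈ Finset.range k,
        ((q : ℂ) * k + r) * ((p : ℂ) - q - r * k) := by
      rw [hNcdef]
      have hstep : ∑ n ∈ Finset.range p, (n : ℂ) * (m₀ n : ℂ)
          = ∑ n ∈ Finset.range (k * k), (n : ℂ) * (m₀ n : ℂ) := by
        rw [hkk, Finset.sum_range_succ, hm₀p]
        simp
      rw [hstep, block_sum]
      refine Finset.sum_congr rfl fun q hq => Finset.sum_congr rfl fun r hr => ?_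
      rw [Finset.mem_range] at hq hr
      by_cases h00 : q = 0 ∧ r = 0
      · obtain ⟨h1, h2⟩ := h00
        subst h1; subst h2
        simp
      · rw [hm₀val q r hq hr h00, Nat.cast_sub (hle q r hq hr)]
        push_cast
        ring
    have hinner : ∀ q : ℕ, ∑ r ∈ Finset.range k, (((q : ℂ) * k + r) * ((p : ℂ) - q - r * k))
        = ((p : ℂ) * ((k : ℂ) * ((k : ℂ) - 1) / 2) - (k : ℂ) * ((k : ℂ) * ((k : ℂ) - 1) * (2 * (k : ℂ) - 1) / 6))
          + ((k : ℂ) ^ 2 * (p : ℂ) - (1 + (k : ℂ) ^ 2) * ((k : ℂ) * ((k : ℂ) - 1) / 2)) * q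
          + (-(k : ℂ) ^ 2) * (q : ℂ) ^ 2 := by
      intro q
      have h1 : ∑ r ∈ Finset.range k, (((q : ℂ) * k + r) * ((p : ℂ) - q - r * k))
          = ∑ r ∈ Finset.range k, (((q : ℂ) * k * ((p : ℂ) - q))
              + ((p : ℂ) - q - q * (k : ℂ) ^ 2) * r + (-(k : ℂ)) * (r : ℂ) ^ 2) :=
        Finset.sum_congr rfl fun r _ => by ring
      rw [h1, sum_poly]
      ring
    have hNc2 : Nc = ((p : ℂ) * ((k : ℂ) * ((k : ℂ) - 1) / 2) - (k : ℂ) * ((k : ℂ) * ((k : ℂ) - 1) * (2 * (k : ℂ) - 1) / 6)) * k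
        + ((k : ℂ) ^ 2 * (p : ℂ) - (1 + (k : ℂ) ^ 2) * ((k : ℂ) * ((k : ℂ) - 1) / 2)) * ((k : ℂ) * ((k : ℂ) - 1) / 2)
        + (-(k : ℂ) ^ 2) * ((k : ℂ) * ((k : ℂ) - 1) * (2 * (k : ℂ) - 1) / 6) := by
      rw [hNc1, Finset.sum_congr rfl fun q _ => hinner q, sum_poly]
    -- assemble
    have hGexp : ∀ i : ℕ, G i = -1 - (2 / (p : ℂ)) * A i - (2 / (p : ℂ)) * A (k * i)
        - (4 / (p : ℂ) ^ 2) * (A i * A (k * i)) := by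
      intro i
      rw [hGdef]
      ring
    have hGsum : ∑ i ∈ Finset.range p, G i = -(p : ℂ) - (4 / (p : ℂ) ^ 2) * ((p : ℂ) * Nc) := by
      rw [Finset.sum_congr rfl fun i _ => hGexp i]
      rw [Finset.sum_sub_distrib, Finset.sum_sub_distrib, Finset.sum_sub_distrib,
        ← Finset.mul_sum, ← Finset.mul_sum, ← Finset.mul_sum, hSA, hSB, hSAB]
      simp only [Finset.sum_const, Finset.card_range, nsmul_eq_mul, mul_neg_one, mul_zero]
      ring
    have hA0 : A 0 = (p : ℂ) * ((p : ℂ) - 1) / 2 := by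
      rw [hAdef]
      simp only [pow_zero, one_pow, mul_one]
      exact sum_range_cast p
    have hG0 : G 0 = -(p : ℂ) ^ 2 := by
      rw [hGdef]
      simp only [mul_zero, hA0]
      field_simp
      ring
    have hins : Finset.range p = insert 0 (Finset.Icc 1 (p - 1)) := by
      ext x
      simp only [Finset.mem_range, Finset.mem_insert, Finset.mem_Icc]
      omega
    have hsplit2 : ∑ i ∈ Finset.Icc 1 (p - 1), G i = (∑ i ∈ Finset.range p, G i) - G 0 := by
      rw [hins, Finset.sum_insert (by simp)]
      ring
    apply Complex.ofReal_inj.mp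
    rw [Complex.ofReal_sum, Finset.sum_congr rfl key, hsplit2, hGsum, hG0, hNc2, hPC]
    have hk1C : (k : ℂ) ^ 2 - 1 ≠ 0 := by rw [← hPC]; exact hp0C
    push_cast
    field_simp
    ring
  rw [etaLens, hS]
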